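/- For every α ∈ (0, 1/2), lim_{s→∞} ℓ^α(s)/√s = −2Φ^{−1}(α), where ℓ^α(s) is the unique positive root in ℓ of J(s,ℓ) = α. -/

import Mathlib

open Real Set Filter Topology

open MeasureTheory

noncomputable def Phi (x : ℝ) : ℝ :=
  (Real.sqrt (2 * Real.pi))⁻¹ * ∫ y in Set.Iic x, Real.exp (-y ^ 2 / 2)

noncomputable def J (s ℓ : ℝ) : ℝ :=
  Phi (-ℓ / (2 * Real.sqrt s)) +
    Real.exp (ℓ ^ 2 * (s - 1) / 2) * Phi (ℓ * (1 / (2 * Real.sqrt s) - Real.sqrt s))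

lemma gauss_integrable : Integrable (fun y : ℝ => Real.exp (-y ^ 2 / 2)) := by
  have heq : (fun y : ℝ => Real.exp (-(1/2) * y ^ 2)) = fun y : ℝ => Real.exp (-y ^ 2 / 2) := by
    funext y; congr 1; ring
  rw [← heq]
  exact integrable_exp_neg_mul_sq (by norm_num)

lemma y_gauss_integrable : Integrable (fun y : ℝ => y * Real.exp (-y ^ 2 / 2)) := by
  have heq : (fun y : ℝ => y * Real.exp (-(1/2) * y ^ 2)) = fun y : ℝ => y * Real.exp (-y ^ 2 / 2) := by
    funext y; congr 2; ring
  rw [← heq]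
  exact integrable_mul_exp_neg_mul_sq (by norm_num)

lemma c_pos : 0 < (Real.sqrt (2 * Real.pi))⁻¹ :=
  inv_pos.2 (Real.sqrt_pos.2 (by positivity))

lemma Phi_lt_Phi {x y : ℝ} (h : x < y) : Phi x < Phi y := by
  unfold Phi
  apply mul_lt_mul_of_pos_left _ c_pos
  have hsplit : Set.Iic x ∪ Set.Ioc x y = Set.Iic y := Set.Iic_union_Ioc_eq_Iic h.le
  have hdisj : Disjoint (Set.Iic x) (Set.Ioc x y) := by
    apply Set.disjoint_left.2
    rintro z hz ⟨hz1, hz2⟩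
    exact absurd hz (not_le.2 hz1)
  rw [← hsplit, MeasureTheory.setIntegral_union hdisj measurableSet_Ioc
    gauss_integrable.integrableOn gauss_integrable.integrableOn]
  have hpos : 0 < ∫ z in Set.Ioc x y, Real.exp (-z ^ 2 / 2) := by
    rw [← intervalIntegral.integral_of_le h.le]
    exact intervalIntegral.intervalIntegral_pos_of_pos
      gauss_integrable.intervalIntegrable (fun z => Real.exp_pos _) h
  linarith

lemma Phi_le_Phi {x y : ℝ} (h : x ≤ y) : Phi x ≤ Phi y := by
  rcases eq_or_lt_of_le h with rfl | h
  · exact le_refl _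
  · exact (Phi_lt_Phi h).le

lemma Phi_pos (z : ℝ) : 0 < Phi z := by
  have h1 : (0:ℝ) ≤ Phi (z - 1) := by
    unfold Phi
    apply mul_nonneg c_pos.le
    exact MeasureTheory.setIntegral_nonneg measurableSet_Iic (fun y _ => (Real.exp_pos _).le)
  linarith [Phi_lt_Phi (show z - 1 < z by linarith)]

lemma lt_of_Phi_lt {x y : ℝ} (h : Phi x < Phi y) : x < y := by
  by_contra hc
  exact absurd h (not_lt.2 (Phi_le_Phi (not_lt.1 hc)))

lemma Phi_zero : Phi 0 = 1/2 := by
  have htot : ∫ y : ℝ, Real.exp (-y ^ 2 / 2) = Real.sqrt (2 * Real.pi) := by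
    have heq : (fun y : ℝ => Real.exp (-(1/2) * y ^ 2)) = fun y : ℝ => Real.exp (-y ^ 2 / 2) := by
      funext y; congr 1; ring
    rw [← heq, integral_gaussian]
    congr 1
    field_simp
  have hsym : (∫ y in Set.Iic (0:ℝ), Real.exp (-y ^ 2 / 2))
      = ∫ y in Set.Ioi (0:ℝ), Real.exp (-y ^ 2 / 2) := by
    have h := integral_comp_neg_Iic (0:ℝ) (fun y => Real.exp (-y ^ 2 / 2))
    simpa [neg_sq] using h
  have hsplit : (∫ y in Set.Iic (0:ℝ), Real.exp (-y ^ 2 / 2))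
      + ∫ y in Set.Ioi (0:ℝ), Real.exp (-y ^ 2 / 2) = Real.sqrt (2 * Real.pi) := by
    rw [← htot, ← MeasureTheory.integral_add_compl measurableSet_Iic gauss_integrable]
    congr 1
    rw [Set.compl_Iic]
  have h2 : (∫ y in Set.Iic (0:ℝ), Real.exp (-y ^ 2 / 2)) = Real.sqrt (2 * Real.pi) / 2 := by
    rw [hsym] at hsplit ⊢
    linarith
  unfold Phi
  rw [h2]
  have hne : Real.sqrt (2*Real.pi) ≠ 0 := by positivity
  field_simp

lemma neg_y_gauss_integrable : Integrable (fun y : ℝ => -y * Real.exp (-y ^ 2 / 2)) := by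
  refine y_gauss_integrable.neg.congr (Filter.Eventually.of_forall fun y => ?_)
  simp [neg_mul]

lemma deriv_gauss (y : ℝ) :
    HasDerivAt (fun y : ℝ => Real.exp (-y ^ 2 / 2)) (-y * Real.exp (-y ^ 2 / 2)) y := by
  have h1 : HasDerivAt (fun y : ℝ => -y ^ 2 / 2) (-y) y := by
    have h' := ((hasDerivAt_pow 2 y).neg).div_const 2
    norm_num at h'
    have : -(2 * y) / 2 = -y := by ring
    rwa [this] at h'
  have h2 := h1.exp
  have : Real.exp (-y ^ 2 / 2) * -y = -y * Real.exp (-y ^ 2 / 2) := by ring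
  rwa [this] at h2

lemma gauss_antideriv (a : ℝ) :
    ∫ y in Set.Iic a, -y * Real.exp (-y ^ 2 / 2) = Real.exp (-a ^ 2 / 2) := by
  have hf : Tendsto (fun y : ℝ => Real.exp (-y ^ 2 / 2)) atBot (𝓝 0) := by
    have ha : Tendsto (fun y : ℝ => y ^ 2) atBot atTop := by
      have h1 : Tendsto (fun y : ℝ => -y) atBot atTop := tendsto_neg_atBot_atTop
      have := (tendsto_pow_atTop (n := 2) (by norm_num)).comp h1
      simpa [Function.comp_def, neg_sq] using this
    have hb : Tendsto (fun y : ℝ => -y ^ 2 / 2) atBot atBot := by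
      have h2 := ha.atTop_mul_const_of_neg (show -(1/2 : ℝ) < 0 by norm_num)
      refine h2.congr fun y => ?_
      ring
    exact Real.tendsto_exp_atBot.comp hb
  have := MeasureTheory.integral_Iic_of_hasDerivAt_of_tendsto' (a := a)
    (fun y _ => deriv_gauss y) neg_y_gauss_integrable.integrableOn hf
  simpa using this

lemma mills {x : ℝ} (hx : 0 < x) :
    Phi (-x) ≤ (Real.sqrt (2 * Real.pi))⁻¹ * (Real.exp (-x ^ 2 / 2) / x) := by
  unfold Phi
  apply mul_le_mul_of_nonneg_left _ c_pos.le
  have hmono : (∫ y in Set.Iic (-x), Real.exp (-y ^ 2 / 2))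
      ≤ ∫ y in Set.Iic (-x), -y * Real.exp (-y ^ 2 / 2) / x := by
    apply MeasureTheory.setIntegral_mono_on gauss_integrable.integrableOn
      (neg_y_gauss_integrable.div_const x).integrableOn measurableSet_Iic
    intro y hy
    have hy' : y ≤ -x := hy
    rw [le_div_iff₀ hx]
    nlinarith [Real.exp_pos (-y ^ 2 / 2)]
  have heval : (∫ y in Set.Iic (-x), -y * Real.exp (-y ^ 2 / 2) / x)
      = Real.exp (-x ^ 2 / 2) / x := by
    rw [MeasureTheory.integral_div, gauss_antideriv]
    congr 2
    rw [neg_sq]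
  linarith [heval ▸ hmono]

set_option maxHeartbeats 1600000

/-- If `ℓα(s)` is the (unique) positive root of `J(s,·) = α` with `α ∈ (0,1/2)`, then
`ℓα(s)/√s → −2Φ⁻¹(α)` as `s → ∞`; here `q = Φ⁻¹(α)` is characterized by `Φ(q) = α`. -/
theorem lalpha_tendsto_infty (α : ℝ) (hα : α ∈ Set.Ioo (0 : ℝ) (1 / 2))
    (q : ℝ) (hq : Phi q = α)
    (ℓα : ℝ → ℝ) (hroot : ∀ s : ℝ, 0 < s → 0 < ℓα s ∧ J s (ℓα s) = α) :
    Tendsto (fun s => ℓα s / Real.sqrt s) atTop (𝓝 (-2 * q)) := by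
  obtain ⟨hα0, hα2⟩ := hα
  have hq0 : q < 0 := by
    apply lt_of_Phi_lt
    rw [hq, Phi_zero]
    linarith
  -- pointwise lower bound, and the bound -q < ℓα s / (2 √s)
  have key : ∀ s : ℝ, 0 < s → -q < ℓα s / (2 * Real.sqrt s) := by
    intro s hs
    obtain ⟨hl, hJ⟩ := hroot s hs
    have hr : 0 < Real.sqrt s := Real.sqrt_pos.2 hs
    have hB : 0 < Real.exp ((ℓα s) ^ 2 * (s - 1) / 2) *
        Phi (ℓα s * (1 / (2 * Real.sqrt s) - Real.sqrt s)) :=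
      mul_pos (Real.exp_pos _) (Phi_pos _)
    have h1 : Phi (-ℓα s / (2 * Real.sqrt s)) < Phi q := by
      unfold J at hJ
      rw [hq]
      linarith
    have h2 : -ℓα s / (2 * Real.sqrt s) < q := lt_of_Phi_lt h1
    have h3 : -(ℓα s / (2 * Real.sqrt s)) < q := by
      rw [neg_div] at h2; exact h2
    linarith
  rw [tendsto_order]
  constructor
  · intro a ha
    filter_upwards [eventually_gt_atTop 0] with s hs
    have hr : 0 < Real.sqrt s := Real.sqrt_pos.2 hs
    have h := key s hs
    have heq : ℓα s / Real.sqrt s = 2 * (ℓα s / (2 * Real.sqrt s)) := by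
      field_simp
    rw [heq]
    nlinarith
  · intro b hb
    have hb2 : -b / 2 < q := by linarith
    have hδ : Phi (-b / 2) < α := by rw [← hq]; exact Phi_lt_Phi hb2
    have hq' : 0 < -q := by linarith
    have hlin0 : Tendsto (fun s : ℝ => 2 * s - 1) atTop atTop := by
      have h1 : Tendsto (fun s : ℝ => 2 * s) atTop atTop :=
        Tendsto.const_mul_atTop two_pos tendsto_id
      have := tendsto_atTop_add_const_right atTop (-1 : ℝ) h1
      simpa [sub_eq_add_neg] using this
    have hE0 : Tendsto (fun s : ℝ => (Real.sqrt (2 * Real.pi))⁻¹ / (-q * (2 * s - 1)))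
        atTop (𝓝 0) :=
      Tendsto.div_atTop tendsto_const_nhds (Tendsto.const_mul_atTop hq' hlin0)
    filter_upwards [hE0.eventually_lt_const (show (0:ℝ) < α - Phi (-b/2) by linarith),
      eventually_gt_atTop 1] with s hEs hs1
    have hs0 : (0:ℝ) < s := by linarith
    obtain ⟨hl, hJ⟩ := hroot s hs0
    have hr : 0 < Real.sqrt s := Real.sqrt_pos.2 hs0
    have hr2 : Real.sqrt s ^ 2 = s := Real.sq_sqrt hs0.le
    have ht : -q < ℓα s / (2 * Real.sqrt s) := key s hs0
    unfold J at hJ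
    set r := Real.sqrt s with hrdef
    clear_value r
    have hr1 : 1 < r := by nlinarith
    set x := ℓα s * (r - 1 / (2 * r)) with hxdef
    clear_value x
    have hx_arg : ℓα s * (1 / (2 * r) - r) = -x := by rw [hxdef]; ring
    have hden : 1 / (2 * r) < r := by
      rw [div_lt_iff₀ (by positivity)]
      nlinarith
    have hxpos : 0 < x := by
      rw [hxdef]
      exact mul_pos hl (by linarith)
    have hmills := mills hxpos
    rw [hx_arg] at hJ
    -- the exponent bound : ℓ² (s-1)/2 - x²/2 ≤ 0
    have hu : r * (1 / (2 * r)) = 1 / 2 := by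
      field_simp
    have hexp0 : (ℓα s) ^ 2 * (s - 1) / 2 + -x ^ 2 / 2 ≤ 0 := by
      rw [hxdef]
      nlinarith [sq_nonneg (ℓα s * (1 / (2 * r))), sq_nonneg (ℓα s)]
    have hexp1 : Real.exp ((ℓα s) ^ 2 * (s - 1) / 2 + -x ^ 2 / 2) ≤ 1 :=
      Real.exp_le_one_iff.2 hexp0
    -- x is bounded below
    have h2s : (0:ℝ) < 2 * s - 1 := by linarith
    have ht' : -q * (2 * r) < ℓα s := by
      rw [lt_div_iff₀ (by positivity)] at ht
      exact ht
    have hxeq : x * (2 * r) = ℓα s * (2 * s - 1) := by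
      rw [hxdef]
      field_simp
      linear_combination 2 * hr2
    have hxlow : -q * (2 * s - 1) ≤ x := by
      nlinarith [mul_pos (sub_pos.2 ht') h2s, hr, hxeq]
    have hqx : 0 < -q * (2 * s - 1) := by
      apply mul_pos hq'
      linarith
    -- chain of bounds on the second term B
    have hchain : Real.exp ((ℓα s) ^ 2 * (s - 1) / 2) * Phi (-x)
        ≤ (Real.sqrt (2 * Real.pi))⁻¹ / (-q * (2 * s - 1)) := by
      calc Real.exp ((ℓα s) ^ 2 * (s - 1) / 2) * Phi (-x)
          ≤ Real.exp ((ℓα s) ^ 2 * (s - 1) / 2) *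
            ((Real.sqrt (2 * Real.pi))⁻¹ * (Real.exp (-x ^ 2 / 2) / x)) := by
            exact mul_le_mul_of_nonneg_left hmills (Real.exp_pos _).le
        _ = (Real.sqrt (2 * Real.pi))⁻¹ *
            (Real.exp ((ℓα s) ^ 2 * (s - 1) / 2 + -x ^ 2 / 2) / x) := by
            rw [Real.exp_add]; ring
        _ ≤ (Real.sqrt (2 * Real.pi))⁻¹ * (1 / x) := by
            apply mul_le_mul_of_nonneg_left _ c_pos.le
            exact (div_le_div_iff_of_pos_right hxpos).2 hexp1
        _ ≤ (Real.sqrt (2 * Real.pi))⁻¹ * (1 / (-q * (2 * s - 1))) := by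
            apply mul_le_mul_of_nonneg_left _ c_pos.le
            exact one_div_le_one_div_of_le hqx hxlow
        _ = (Real.sqrt (2 * Real.pi))⁻¹ / (-q * (2 * s - 1)) := by
            rw [mul_one_div]
    -- hence Phi(-ℓ/(2r)) > Phi(-b/2)
    have h4 : Phi (-b / 2) < Phi (-ℓα s / (2 * r)) := by
      have hlt : Real.exp ((ℓα s) ^ 2 * (s - 1) / 2) * Phi (-x) < α - Phi (-b / 2) :=
        lt_of_le_of_lt hchain hEs
      have hA : Phi (-ℓα s / (2 * r)) = α - Real.exp ((ℓα s) ^ 2 * (s - 1) / 2) * Phi (-x) :=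
        eq_sub_of_add_eq hJ
      rw [hA]
      linarith only [hlt]
    have h5 : -b / 2 < -ℓα s / (2 * r) := lt_of_Phi_lt h4
    rw [neg_div, neg_div] at h5
    have h6 : ℓα s / (2 * r) < b / 2 := by linarith only [h5]
    rw [div_lt_iff₀ (mul_pos two_pos hr)] at h6
    rw [div_lt_iff₀ hr]
    linarith only [h6]
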